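/- Minimal atomic representation in the Hamburger TMP: If β = (β_0,...,β_{2k}) ∈ ℝ^{2k+1} with β_0 > 0 has a representing measure on ℝ, then it has a representing measure consisting of exactly rank β atoms, where rank β is k+1 if A_β is invertible and otherwise the minimal index i with the i-th column of A_β dependent on the preceding columns. -/

import Mathlib

open Matrix

/-- The (k+1)×(k+1) Hankel matrix of a sequence β = (β₀,...,β₂ₖ). -/
def hankel {k : ℕ} (β : Fin (2*k+1) → ℝ) : Matrix (Fin (k+1)) (Fin (k+1)) ℝ :=
  fun i j => β ⟨i.1 + j.1, by have := i.2; have := j.2; omega⟩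

/-- The leading principal (j+1)×(j+1) submatrix A(j) of a (k+1)×(k+1) matrix, j ≤ k. -/
def leadSub {k : ℕ} (A : Matrix (Fin (k+1)) (Fin (k+1)) ℝ) (j : ℕ) (h : j ≤ k) :
    Matrix (Fin (j+1)) (Fin (j+1)) ℝ :=
  A.submatrix (Fin.castLE (by omega)) (Fin.castLE (by omega))

/-- The leading principal r×r submatrix of a (k+1)×(k+1) matrix, r ≤ k+1. -/
def leadSq {k : ℕ} (A : Matrix (Fin (k+1)) (Fin (k+1)) ℝ) (r : ℕ) (h : r ≤ k+1) :
    Matrix (Fin r) (Fin r) ℝ :=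
  A.submatrix (Fin.castLE h) (Fin.castLE h)

/-- The rank of a sequence via its Hankel matrix: k+1 if the matrix is nonsingular, and
otherwise the least index i whose column lies in the span of the preceding columns. -/
noncomputable def hankelRank {k : ℕ} (A : Matrix (Fin (k+1)) (Fin (k+1)) ℝ) : ℕ :=
  if A.det ≠ 0 then k+1
  else sInf {i : ℕ | ∃ h : i < k+1,
    (fun r => A r ⟨i, h⟩) ∈ Submodule.span ℝ
      {c : Fin (k+1) → ℝ | ∃ j : Fin (k+1), j.1 < i ∧ c = fun r => A r j}}

/-- The truncation (β₀,...,β₂₍ₖ₋₁₎) of (β₀,...,β₂ₖ). -/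
def trunc {k : ℕ} (β : Fin (2*k+1) → ℝ) : Fin (2*(k-1)+1) → ℝ :=
  fun i => β ⟨i.1, by have := i.2; omega⟩
open Matrix MeasureTheory

/-- β = (β₀,...,β₂ₖ) admits a representing measure on ℝ: a positive Borel measure whose
power moments up to degree 2k match β. -/
def HasRep (k : ℕ) (β : Fin (2*k+1) → ℝ) : Prop :=
  ∃ μ : Measure ℝ,
    (∀ i : Fin (2*k+1), Integrable (fun x : ℝ => x ^ (i : ℕ)) μ) ∧
    ∀ i : Fin (2*k+1), β i = ∫ x, x ^ (i : ℕ) ∂μ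

/-- Minimal atomic representation: if β (with β₀ > 0) has a representing measure on ℝ,
then it has one with exactly (rank β) atoms. -/
lemma sum_ite_lt {n s : ℕ} (hs : s ≤ n) (f : ℕ → ℝ) :
    ∑ j : Fin n, (if j.1 < s then f j.1 else 0) = ∑ j ∈ Finset.range s, f j := by
  rw [Fin.sum_univ_eq_sum_range (fun j => if j < s then f j else 0) n]
  rw [← Finset.sum_subset (Finset.range_subset_range.mpr hs)
    (fun x _ hx => by rw [if_neg (by simpa using hx)])]
  exact Finset.sum_congr rfl fun j hj => if_pos (Finset.mem_range.mp hj)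

open Polynomial in
/-- For an atomic sequence with `s ≤ k` atoms, column `s` of the Hankel matrix is a
combination of the previous columns, and columns `0,...,s-1` are independent. -/
lemma atomic_cols {k s : ℕ} (A : Matrix (Fin (k+1)) (Fin (k+1)) ℝ) (hs : s ≤ k)
    (x : Fin s → ℝ) (ρ : Fin s → ℝ) (hx : Function.Injective x) (hρ : ∀ j, 0 < ρ j)
    (hA : ∀ i j : Fin (k+1), A i j = ∑ m, ρ m * x m ^ (i.1 + j.1)) :
    ((fun r => A r ⟨s, by omega⟩) ∈ Submodule.span ℝ
      {c : Fin (k+1) → ℝ | ∃ j : Fin (k+1), j.1 < s ∧ c = fun r => A r j}) ∧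
    (∀ (i : ℕ) (_hi : i < s), ¬ ((fun r => A r ⟨i, by omega⟩) ∈ Submodule.span ℝ
      {c : Fin (k+1) → ℝ | ∃ j : Fin (k+1), j.1 < i ∧ c = fun r => A r j})) := by
  constructor
  · -- column s is a combination of previous columns
    set Q : Polynomial ℝ := ∏ m : Fin s, (X - C (x m)) with hQ
    have hQm : Q.Monic := monic_prod_of_monic _ _ (fun m _ => monic_X_sub_C (x m))
    have hQd : Q.natDegree = s := by
      rw [hQ, natDegree_prod_of_monic _ _ (fun m _ => monic_X_sub_C (x m))]
      simp [natDegree_X_sub_C]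
    have hroot : ∀ m : Fin s, ∀ n : ℕ, x m ^ (n + s) =
        ∑ j ∈ Finset.range s, (-Q.coeff j) * x m ^ (n + j) := by
      intro m n
      have h0 : Q.eval (x m) = 0 := by
        rw [hQ, eval_prod]
        exact Finset.prod_eq_zero (Finset.mem_univ m) (by simp)
      have hc1 : Q.coeff s = 1 := by rw [← hQd]; exact hQm.coeff_natDegree
      have hev := eval_eq_sum_range (p := Q) (x := x m)
      rw [h0, hQd, Finset.sum_range_succ, hc1, one_mul] at hev
      have hxs : x m ^ s = -∑ j ∈ Finset.range s, Q.coeff j * x m ^ j := by linarith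
      rw [pow_add, hxs, mul_neg, Finset.mul_sum, ← Finset.sum_neg_distrib]
      exact Finset.sum_congr rfl fun j hj => by rw [pow_add]; ring
    have key : ∀ r : Fin (k+1), A r ⟨s, by omega⟩ =
        ∑ t : Fin s, (-Q.coeff t.1) * A r ⟨t.1, by omega⟩ := by
      intro r
      simp only [hA]
      rw [Fin.sum_univ_eq_sum_range
        (fun t => -Q.coeff t * ∑ m, ρ m * x m ^ (r.1 + t)) s]
      have swap : ∑ j ∈ Finset.range s, -Q.coeff j * ∑ m, ρ m * x m ^ (r.1 + j)
          = ∑ m, ρ m * ∑ j ∈ Finset.range s, -Q.coeff j * x m ^ (r.1 + j) := by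
        simp only [Finset.mul_sum]
        rw [Finset.sum_comm]
        refine Finset.sum_congr rfl fun m _ => Finset.sum_congr rfl fun j _ => by ring
      rw [swap]
      refine Finset.sum_congr rfl fun m _ => ?_
      rw [hroot m r.1]
    have hcol : (fun r => A r ⟨s, by omega⟩) =
        ∑ t : Fin s, (-Q.coeff t.1) • (fun r => A r ⟨t.1, by omega⟩) := by
      funext r
      rw [Finset.sum_apply]
      simp only [Pi.smul_apply, smul_eq_mul]
      exact key r
    rw [hcol]
    refine Submodule.sum_mem _ fun t _ => ?_
    refine Submodule.smul_mem _ _ (Submodule.subset_span ?_)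
    exact ⟨⟨t.1, by omega⟩, t.2, rfl⟩
  · -- independence of earlier columns
    intro i hi hmem
    have his : i < k + 1 := by omega
    rw [Submodule.mem_span_set'] at hmem
    obtain ⟨N, f, g, hsum⟩ := hmem
    have hg : ∀ t : Fin N, ∃ j : Fin (k+1), j.1 < i ∧ (g t : Fin (k+1) → ℝ) = fun r => A r j :=
      fun t => (g t).2
    choose jt hjt hgeq using hg
    set G : ℝ → ℝ := fun y => y ^ i - ∑ t, f t * y ^ (jt t).1 with hG
    have hrow : ∀ r : Fin (k+1), ∑ m, ρ m * x m ^ r.1 * G (x m) = 0 := by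
      intro r
      have h1 : A r ⟨i, his⟩ = ∑ t, f t * A r (jt t) := by
        have := congrFun hsum r
        simp only [Finset.sum_apply, Pi.smul_apply, smul_eq_mul] at this
        rw [← this]
        refine (Finset.sum_congr rfl fun t _ => ?_).symm
        rw [hgeq t]
      have expand : ∀ m : Fin s, ρ m * x m ^ r.1 * G (x m) =
          ρ m * x m ^ (r.1 + i) - ∑ t, f t * (ρ m * x m ^ (r.1 + (jt t).1)) := by
        intro m
        rw [hG]
        simp only []
        rw [mul_sub, Finset.mul_sum]
        congr 1
        · rw [pow_add]; ring
        · refine Finset.sum_congr rfl fun t _ => by rw [pow_add]; ring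
      rw [Finset.sum_congr rfl (fun m _ => expand m), Finset.sum_sub_distrib]
      rw [Finset.sum_comm]
      have e1 : ∑ m, ρ m * x m ^ (r.1 + i) = A r ⟨i, his⟩ := (hA r ⟨i, his⟩).symm
      have e2 : ∀ t : Fin N, ∑ m, f t * (ρ m * x m ^ (r.1 + (jt t).1)) = f t * A r (jt t) := by
        intro t
        rw [← Finset.mul_sum]
        congr 1
        exact (hA r (jt t)).symm
      rw [e1, Finset.sum_congr rfl (fun t _ => e2 t), h1, sub_self]
    have hsq : ∑ m, ρ m * G (x m) ^ 2 = 0 := by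
      have expand : ∀ m : Fin s, ρ m * G (x m) ^ 2 =
          ρ m * x m ^ i * G (x m) - ∑ t, f t * (ρ m * x m ^ (jt t).1 * G (x m)) := by
        intro m
        have hsq2 : G (x m) ^ 2 = G (x m) * G (x m) := sq (G (x m))
        rw [hsq2]
        nth_rewrite 1 [hG]
        simp only []
        rw [sub_mul, Finset.sum_mul, mul_sub, Finset.mul_sum]
        congr 1
        · ring
        · refine Finset.sum_congr rfl fun t _ => by ring
      rw [Finset.sum_congr rfl (fun m _ => expand m), Finset.sum_sub_distrib]
      have e1 : ∑ m, ρ m * x m ^ i * G (x m) = 0 := by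
        have := hrow ⟨i, his⟩
        simpa using this
      rw [Finset.sum_comm]
      have e2 : ∀ t : Fin N, ∑ m, f t * (ρ m * x m ^ (jt t).1 * G (x m)) = 0 := by
        intro t
        rw [← Finset.mul_sum]
        have : ∑ m, ρ m * x m ^ (jt t).1 * G (x m) = 0 := hrow (jt t)
        rw [this, mul_zero]
      rw [e1, Finset.sum_congr rfl (fun t _ => e2 t), Finset.sum_const, smul_zero, sub_zero]
    have hGzero : ∀ m : Fin s, G (x m) = 0 := by
      intro m
      have hnonneg : ∀ m : Fin s, 0 ≤ ρ m * G (x m) ^ 2 :=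
        fun m => mul_nonneg (hρ m).le (sq_nonneg _)
      have := (Finset.sum_eq_zero_iff_of_nonneg (fun m _ => hnonneg m)).mp hsq m (Finset.mem_univ m)
      have h2 : G (x m) ^ 2 = 0 := by
        rcases mul_eq_zero.mp this with h | h
        · exact absurd h (hρ m).ne'
        · exact h
      exact (pow_eq_zero_iff two_ne_zero).mp h2
    set q : Polynomial ℝ := X ^ i - ∑ t, C (f t) * X ^ (jt t).1 with hq
    have hqeval : ∀ y : ℝ, q.eval y = G y := by
      intro y
      rw [hq, hG]
      simp [eval_finset_sum]
    have hqcoeff : q.coeff i = 1 := by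
      rw [hq, coeff_sub, coeff_X_pow, if_pos rfl, finset_sum_coeff]
      have : ∀ t ∈ Finset.univ, (C (f t) * X ^ (jt t).1).coeff i = 0 := by
        intro t _
        rw [coeff_C_mul, coeff_X_pow, if_neg (by have := hjt t; omega), mul_zero]
      rw [Finset.sum_congr rfl this, Finset.sum_const, smul_zero, sub_zero]
    have hq0 : q ≠ 0 := fun h => by simp [h] at hqcoeff
    have hqdeg : q.natDegree ≤ i := by
      rw [hq]
      refine (natDegree_sub_le _ _).trans ?_
      simp only [natDegree_X_pow, max_le_iff]
      refine ⟨le_refl i, (natDegree_sum_le _ _).trans ?_⟩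
      rw [Finset.fold_max_le]
      refine ⟨Nat.zero_le i, fun t _ => ?_⟩
      refine (natDegree_C_mul_le _ _).trans ?_
      rw [natDegree_X_pow]
      have := hjt t; omega
    have himg : (Finset.univ.image x) ⊆ q.roots.toFinset := by
      intro y hy
      obtain ⟨m, _, rfl⟩ := Finset.mem_image.mp hy
      rw [Multiset.mem_toFinset, mem_roots hq0, IsRoot.def, hqeval]
      exact hGzero m
    have hcard : s ≤ q.natDegree := by
      calc s = (Finset.univ.image x).card := by
              rw [Finset.card_image_of_injective _ hx, Finset.card_univ, Fintype.card_fin]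
        _ ≤ q.roots.toFinset.card := Finset.card_le_card himg
        _ ≤ Multiset.card q.roots := q.roots.toFinset_card_le
        _ ≤ q.natDegree := q.card_roots'
    omega

open Polynomial in

lemma rep_atomic {k : ℕ} (β : Fin (2*k+1) → ℝ) (μ : Measure ℝ)
    (hint : ∀ i : Fin (2*k+1), Integrable (fun x : ℝ => x ^ (i:ℕ)) μ)
    (hmom : ∀ i : Fin (2*k+1), β i = ∫ x, x ^ (i:ℕ) ∂μ)
    (hβ0 : 0 < β ⟨0, Nat.succ_pos _⟩)
    (hdet : (hankel β).det = 0) :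
    ∃ (s : ℕ), 1 ≤ s ∧ s ≤ k ∧ ∃ (x : Fin s → ℝ) (ρ : Fin s → ℝ),
      Function.Injective x ∧ (∀ j, 0 < ρ j) ∧
      ∀ i : Fin (2*k+1), β i = ∑ j, ρ j * x j ^ (i:ℕ) := by
  classical
  have hi : ∀ n : ℕ, n ≤ 2*k → Integrable (fun x : ℝ => x ^ n) μ :=
    fun n hn => hint ⟨n, by omega⟩
  have hm : ∀ (n : ℕ) (hn : n < 2*k+1), β ⟨n, hn⟩ = ∫ x, x ^ n ∂μ :=
    fun n hn => hmom ⟨n, hn⟩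
  obtain ⟨v, hv0, hvA⟩ := (Matrix.exists_mulVec_eq_zero_iff).mpr hdet
  set g : ℝ → ℝ := fun y => ∑ j : Fin (k+1), v j * y ^ j.1 with hg
  -- integrability of x^r * g
  have hfun : ∀ r : ℕ, (fun y : ℝ => y ^ r * g y) =
      fun y => ∑ j : Fin (k+1), v j * y ^ (r + j.1) := by
    intro r
    funext y
    rw [hg]
    simp only []
    rw [Finset.mul_sum]
    exact Finset.sum_congr rfl fun j _ => by rw [pow_add]; ring
  have hg_int : ∀ r : ℕ, r ≤ k → Integrable (fun y : ℝ => y ^ r * g y) μ := by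
    intro r hr
    rw [hfun r]
    refine integrable_finset_sum _ fun j _ => ?_
    exact (hi (r + j.1) (by have := j.2; omega)).const_mul _
  -- the rows vanish
  have hrow : ∀ r : Fin (k+1), ∫ y, y ^ r.1 * g y ∂μ = 0 := by
    intro r
    have : ∫ y, y ^ r.1 * g y ∂μ = ∑ j : Fin (k+1), v j * ∫ y, y ^ (r.1 + j.1) ∂μ := by
      rw [hfun r.1, integral_finset_sum _ (fun j _ =>
        (hi (r.1 + j.1) (by have := j.2; omega)).const_mul _)]
      exact Finset.sum_congr rfl fun j _ => integral_const_mul _ _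
    rw [this]
    have hz := congrFun hvA r
    rw [Matrix.mulVec, dotProduct, Pi.zero_apply] at hz
    rw [← hz]
    refine Finset.sum_congr rfl fun j _ => ?_
    rw [hankel, hm (r.1 + j.1) (by have := r.2; have := j.2; omega)]
    ring
  -- ∫ g² = 0
  have hg2_int : Integrable (fun y : ℝ => g y ^ 2) μ := by
    have : (fun y : ℝ => g y ^ 2) = fun y => ∑ j : Fin (k+1), v j * (y ^ j.1 * g y) := by
      funext y
      rw [sq, hg]
      simp only []
      rw [Finset.sum_mul]
      exact Finset.sum_congr rfl fun j _ => by ring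
    rw [this]
    exact integrable_finset_sum _ fun j _ => ((hg_int j.1 (by have := j.2; omega)).const_mul _)
  have hsq : ∫ y, g y ^ 2 ∂μ = 0 := by
    have e : (fun y : ℝ => g y ^ 2) = fun y => ∑ j : Fin (k+1), v j * (y ^ j.1 * g y) := by
      funext y
      rw [sq, hg]
      simp only []
      rw [Finset.sum_mul]
      exact Finset.sum_congr rfl fun j _ => by ring
    rw [e, integral_finset_sum _ (fun j _ =>
      ((hg_int j.1 (by have := j.2; omega)).const_mul _))]
    refine Finset.sum_eq_zero fun j _ => ?_
    rw [integral_const_mul, hrow ⟨j.1, by omega⟩, mul_zero]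
  have haeg : ∀ᵐ y ∂μ, g y = 0 := by
    have := (integral_eq_zero_iff_of_nonneg (fun y => sq_nonneg (g y)) hg2_int).mp hsq
    filter_upwards [this] with y hy
    exact (pow_eq_zero_iff two_ne_zero).mp hy
  -- the polynomial P
  set P : Polynomial ℝ := ∑ j : Fin (k+1), C (v j) * X ^ j.1 with hP
  have heval : ∀ y : ℝ, P.eval y = g y := by
    intro y
    rw [hP, hg]
    simp [eval_finset_sum]
  have hcoeff : ∀ j : Fin (k+1), P.coeff j.1 = v j := by
    intro j
    rw [hP, finset_sum_coeff]
    rw [Finset.sum_eq_single j]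
    · rw [coeff_C_mul, coeff_X_pow, if_pos rfl, mul_one]
    · intro t _ ht
      rw [coeff_C_mul, coeff_X_pow, if_neg (fun h => ht (Fin.ext h.symm)), mul_zero]
    · intro h
      exact absurd (Finset.mem_univ j) h
  have hP0 : P ≠ 0 := by
    intro h
    apply hv0
    funext j
    have := hcoeff j
    rw [h, coeff_zero] at this
    exact this.symm
  have hPdeg : P.natDegree ≤ k := by
    rw [hP]
    refine (natDegree_sum_le _ _).trans ?_
    rw [Finset.fold_max_le]
    refine ⟨Nat.zero_le k, fun j _ => ?_⟩
    refine (natDegree_C_mul_le _ _).trans ?_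
    rw [natDegree_X_pow]
    have := j.2; omega
  set F : Finset ℝ := P.roots.toFinset with hF
  have hmemF : ∀ y : ℝ, y ∈ F ↔ g y = 0 := by
    intro y
    rw [hF, Multiset.mem_toFinset, mem_roots hP0, IsRoot.def, heval]
  have hres : μ.restrict ↑F = μ := by
    refine Measure.restrict_eq_self_of_ae_mem ?_
    filter_upwards [haeg] with y hy
    exact (hmemF y).mpr hy
  haveI : IsFiniteMeasure μ := by
    constructor
    have h1 : Integrable (fun _ : ℝ => (1:ℝ)) μ := by
      have := hi 0 (by omega)
      simpa using this
    rcases integrable_const_iff.mp h1 with h | h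
    · exact absurd h one_ne_zero
    · exact h.measure_univ_lt_top
  have hsum : ∀ (n : ℕ) (hn : n < 2*k+1),
      β ⟨n, hn⟩ = ∑ a ∈ F, (μ {a}).toReal * a ^ n := by
    intro n hn
    have h2 : ∫ y, y ^ n ∂μ = ∫ y in (↑F : Set ℝ), y ^ n ∂μ := by rw [hres]
    rw [hm n hn, h2, setIntegral_finset F (f := fun y => y ^ n) ((hi n (by omega)).integrableOn)]
    exact Finset.sum_congr rfl fun a _ => by rw [smul_eq_mul]; rfl
  set T : Finset ℝ := F.filter (fun a => (μ {a}).toReal ≠ 0) with hT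
  have hmemT : ∀ a : ℝ, a ∈ T ↔ a ∈ F ∧ (μ {a}).toReal ≠ 0 := fun a => Finset.mem_filter
  have hsumT : ∀ (n : ℕ) (hn : n < 2*k+1),
      β ⟨n, hn⟩ = ∑ a ∈ T, (μ {a}).toReal * a ^ n := by
    intro n hn
    rw [hsum n hn, hT]
    exact (Finset.sum_filter_of_ne (fun a _ h => by
      intro h0
      rw [h0, zero_mul] at h
      exact h rfl)).symm
  have hTk : T.card ≤ k := by
    calc T.card ≤ F.card := Finset.card_le_card (Finset.filter_subset _ _)
      _ ≤ Multiset.card P.roots := Multiset.toFinset_card_le _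
      _ ≤ P.natDegree := P.card_roots'
      _ ≤ k := hPdeg
  have hT1 : 1 ≤ T.card := by
    rcases Nat.eq_zero_or_pos T.card with h | h
    · exfalso
      have hTe : T = ∅ := Finset.card_eq_zero.mp h
      have := hsumT 0 (by omega)
      rw [hTe, Finset.sum_empty] at this
      rw [this] at hβ0
      exact lt_irrefl 0 hβ0
    · exact h
  refine ⟨T.card, hT1, hTk, ?_⟩
  set e := T.equivFin with he
  refine ⟨fun i => ((e.symm i : T) : ℝ), fun i => (μ {((e.symm i : T) : ℝ)}).toReal, ?_, ?_, ?_⟩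
  · intro a b hab
    exact e.symm.injective (Subtype.ext hab)
  · intro j
    have hmem : ((e.symm j : T) : ℝ) ∈ T := (e.symm j).2
    show 0 < (μ {((e.symm j : T) : ℝ)}).toReal
    exact lt_of_le_of_ne ENNReal.toReal_nonneg (Ne.symm ((hmemT _).mp hmem).2)
  · intro i
    rw [show β i = β ⟨i.1, i.2⟩ from rfl, hsumT i.1 i.2]
    rw [← Finset.sum_coe_sort T (fun a => (μ {(a:ℝ)}).toReal * (a:ℝ) ^ i.1)]
    exact (Equiv.sum_comp e.symm (fun a : T => (μ {(a:ℝ)}).toReal * (a:ℝ) ^ i.1)).symm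

lemma hankel_posSemidef {k : ℕ} (β : Fin (2*k+1) → ℝ) (μ : Measure ℝ)
    (hint : ∀ i : Fin (2*k+1), Integrable (fun x : ℝ => x ^ (i:ℕ)) μ)
    (hmom : ∀ i : Fin (2*k+1), β i = ∫ x, x ^ (i:ℕ) ∂μ) :
    (hankel β).PosSemidef := by
  have hi : ∀ n : ℕ, n ≤ 2*k → Integrable (fun x : ℝ => x ^ n) μ :=
    fun n hn => hint ⟨n, by omega⟩
  have hm : ∀ (n : ℕ) (hn : n < 2*k+1), β ⟨n, hn⟩ = ∫ x, x ^ n ∂μ :=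
    fun n hn => hmom ⟨n, hn⟩
  refine posSemidef_iff_dotProduct_mulVec.mpr ⟨?_, ?_⟩
  · rw [Matrix.IsHermitian]
    ext i j
    rw [conjTranspose_apply, hankel, hankel]
    rw [RCLike.star_def, starRingEnd_apply, star_trivial]
    exact congrArg β (Fin.ext (by simp [add_comm]))
  · intro y
    rw [dotProduct]
    have expand : ∀ i : Fin (k+1), star y i * ((hankel β) *ᵥ y) i =
        ∑ j : Fin (k+1), y i * y j * ∫ x, x ^ (i.1 + j.1) ∂μ := by
      intro i
      rw [Matrix.mulVec, dotProduct, Finset.mul_sum]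
      refine Finset.sum_congr rfl fun j _ => ?_
      rw [Pi.star_apply, star_trivial, hankel]
      rw [hm (i.1 + j.1) (by have := i.2; have := j.2; omega)]
      ring
    rw [Finset.sum_congr rfl (fun i _ => expand i)]
    have swap : ∑ i : Fin (k+1), ∑ j : Fin (k+1), y i * y j * ∫ x, x ^ (i.1 + j.1) ∂μ =
        ∫ x, (∑ i : Fin (k+1), y i * x ^ i.1) ^ 2 ∂μ := by
      have e1 : ∀ x : ℝ, (∑ i : Fin (k+1), y i * x ^ i.1) ^ 2 =
          ∑ i : Fin (k+1), ∑ j : Fin (k+1), y i * y j * x ^ (i.1 + j.1) := by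
        intro x
        rw [sq, Finset.sum_mul_sum]
        exact Finset.sum_congr rfl fun i _ => Finset.sum_congr rfl fun j _ => by
          rw [pow_add]; ring
      have hint2 : ∀ (i j : Fin (k+1)),
          Integrable (fun x : ℝ => y i * y j * x ^ (i.1 + j.1)) μ :=
        fun i j => (hi (i.1+j.1) (by have := i.2; have := j.2; omega)).const_mul _
      rw [integral_congr_ae (Filter.Eventually.of_forall (fun x => e1 x))]
      rw [integral_finset_sum _ (fun i _ => integrable_finset_sum _ (fun j _ => hint2 i j))]
      refine Finset.sum_congr rfl fun i _ => ?_
      rw [integral_finset_sum _ (fun j _ => hint2 i j)]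
      exact Finset.sum_congr rfl fun j _ => (integral_const_mul _ _).symm
    rw [swap]
    exact integral_nonneg fun x => sq_nonneg _

variable {k : ℕ}

/-- Companion-type matrix of the monic polynomial `X^{k+1} - ∑ c_j X^j`. -/
def compM (c : Fin (k+1) → ℝ) : Matrix (Fin (k+1)) (Fin (k+1)) ℝ :=
  fun i j => (if j.1 = k then c i else 0) + (if i.1 = j.1 + 1 then 1 else 0)

lemma compM_mulVec (c : Fin (k+1) → ℝ) (w : Fin (k+1) → ℝ) (i : Fin (k+1)) :
    (compM c *ᵥ w) i = c i * w ⟨k, by omega⟩ +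
      (if h : i.1 = 0 then 0 else w ⟨i.1 - 1, by omega⟩) := by
  rw [Matrix.mulVec, dotProduct]
  have expand : ∀ j : Fin (k+1), compM c i j * w j =
      (if j = ⟨k, by omega⟩ then c i * w ⟨k, by omega⟩ else 0) +
      (if h' : i.1 = 0 then 0 else if j = ⟨i.1 - 1, by omega⟩ then w ⟨i.1 - 1, by omega⟩ else 0) := by
    intro j
    rw [compM, add_mul]
    congr 1
    · by_cases hj : j = ⟨k, by omega⟩
      · rw [if_pos hj, if_pos (by rw [hj]), hj]
      · rw [if_neg hj, if_neg (fun h => hj (Fin.ext h)), zero_mul]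
    · by_cases hi : i.1 = 0
      · rw [dif_pos hi, if_neg (by omega), zero_mul]
      · rw [dif_neg hi]
        by_cases hj : j = ⟨i.1 - 1, by omega⟩
        · rw [if_pos (by rw [hj]; simp; omega), if_pos hj, one_mul, hj]
        · rw [if_neg, zero_mul, if_neg hj]
          intro h
          apply hj
          apply Fin.ext
          simp
          omega
  rw [Finset.sum_congr rfl (fun j _ => expand j), Finset.sum_add_distrib]
  congr 1
  · rw [Finset.sum_ite_eq' Finset.univ (⟨k, by omega⟩ : Fin (k+1))
      (fun _ => c i * w ⟨k, by omega⟩), if_pos (Finset.mem_univ _)]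
  · by_cases hi : i.1 = 0
    · rw [dif_pos hi]
      refine Finset.sum_eq_zero fun j _ => ?_
      rw [dif_pos hi]
    · rw [dif_neg hi]
      have : ∀ j : Fin (k+1), (if h' : i.1 = 0 then (0:ℝ)
          else if j = ⟨i.1 - 1, by omega⟩ then w ⟨i.1 - 1, by omega⟩ else 0) =
          (if j = ⟨i.1 - 1, by omega⟩ then w ⟨i.1 - 1, by omega⟩ else 0) := by
        intro j
        rw [dif_neg hi]
      rw [Finset.sum_congr rfl (fun j _ => this j),
        Finset.sum_ite_eq' Finset.univ (⟨i.1 - 1, by omega⟩ : Fin (k+1)) _,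
        if_pos (Finset.mem_univ _)]

lemma compM_last_zero (c : Fin (k+1) → ℝ) (lam : ℝ) (w : Fin (k+1) → ℝ)
    (hw : compM c *ᵥ w = lam • w) (h0 : w ⟨k, by omega⟩ = 0) : w = 0 := by
  have hdesc : ∀ d : ℕ, w ⟨k - d, by omega⟩ = 0 := by
    intro d
    induction d with
    | zero => exact h0
    | succ d ih =>
      by_cases hd : d < k
      · have hrow := congrFun hw ⟨k - d, by omega⟩
        rw [compM_mulVec, Pi.smul_apply, smul_eq_mul] at hrow
        rw [dif_neg (by omega : ¬ (k - d = 0))] at hrow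
        have hstep : w ⟨k - d - 1, by omega⟩ = lam * w ⟨k - d, by omega⟩ - c ⟨k - d, by omega⟩ * w ⟨k, by omega⟩ := by
          linarith [hrow]
        have he : (⟨k - (d+1), by omega⟩ : Fin (k+1)) = ⟨k - d - 1, by omega⟩ :=
          Fin.ext (show k - (d+1) = k - d - 1 by omega)
        rw [he, hstep, ih, h0, mul_zero, mul_zero, sub_zero]
      · have he : (⟨k - (d+1), by omega⟩ : Fin (k+1)) = ⟨k - d, by omega⟩ :=
          Fin.ext (show k - (d+1) = k - d by omega)
        rw [he, ih]
  funext i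
  have := hdesc (k - i.1)
  have he : (⟨k - (k - i.1), by omega⟩ : Fin (k+1)) = i :=
    Fin.ext (show k - (k - i.1) = i.1 by have := i.2; omega)
  rw [he] at this
  exact this

lemma compM_root (c : Fin (k+1) → ℝ) (lam : ℝ) (w : Fin (k+1) → ℝ)
    (hw : compM c *ᵥ w = lam • w) (hw0 : w ≠ 0) :
    lam ^ (k+1) = ∑ j : Fin (k+1), c j * lam ^ j.1 := by
  have hlast : w ⟨k, by omega⟩ ≠ 0 := fun h => hw0 (compM_last_zero c lam w hw h)
  have claim : ∀ d : ℕ, d ≤ k → lam ^ (k - d + 1) * w ⟨k - d, by omega⟩ =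
      (lam ^ (k+1) - ∑ j : Fin (k+1), (if k - d < j.1 then c j * lam ^ j.1 else 0)) *
        w ⟨k, by omega⟩ := by
    intro d
    induction d with
    | zero =>
      intro _
      have hz : ∀ j : Fin (k+1), (if k - 0 < j.1 then c j * lam ^ j.1 else 0) = 0 :=
        fun j => if_neg (by have := j.2; omega)
      rw [Finset.sum_congr rfl (fun j _ => hz j), Finset.sum_const, smul_zero, sub_zero]
      norm_num
    | succ d ih =>
      intro hd1
      have ihd := ih (by omega)
      rw [pow_succ] at ihd
      have hrow := congrFun hw ⟨k - d, by omega⟩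
      rw [compM_mulVec, Pi.smul_apply, smul_eq_mul,
        dif_neg (show ¬((⟨k - d, by omega⟩ : Fin (k+1)).1 = 0) by simp; omega)] at hrow
      have hsplit : (∑ j : Fin (k+1), if k - (d+1) < j.1 then c j * lam ^ j.1 else 0) =
          (∑ j : Fin (k+1), if k - d < j.1 then c j * lam ^ j.1 else 0)
            + c ⟨k - d, by omega⟩ * lam ^ (k - d) := by
      -- decompose the indicator
        have hterm : ∀ j : Fin (k+1), (if k - (d+1) < j.1 then c j * lam ^ j.1 else 0) =
            (if k - d < j.1 then c j * lam ^ j.1 else 0)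
              + (if j = ⟨k - d, by omega⟩ then c j * lam ^ j.1 else 0) := by
          intro j
          by_cases hj : j = ⟨k - d, by omega⟩
          · have hjv : j.1 = k - d := by rw [hj]
            rw [if_pos (by omega), if_neg (by omega), if_pos hj, zero_add]
          · have hjv : j.1 ≠ k - d := fun h => hj (Fin.ext h)
            rw [if_neg hj, add_zero]
            by_cases hlt : k - d < j.1
            · rw [if_pos hlt, if_pos (by omega)]
            · rw [if_neg hlt, if_neg (by omega)]
        rw [Finset.sum_congr rfl (fun j _ => hterm j), Finset.sum_add_distrib]
        congr 1
        rw [Finset.sum_ite_eq' Finset.univ (⟨k - d, by omega⟩ : Fin (k+1))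
          (fun j => c j * lam ^ j.1), if_pos (Finset.mem_univ _)]
      have hexp : k - (d+1) + 1 = k - d := by omega
      have hidx : (⟨k - (d+1), by omega⟩ : Fin (k+1)) = ⟨k - d - 1, by omega⟩ :=
        Fin.ext (show k - (d+1) = k - d - 1 by omega)
      rw [hexp, hidx, hsplit]
      linear_combination (lam ^ (k - d)) * hrow + ihd
  have hc := claim k (le_refl k)
  simp only [Nat.sub_self] at hc
  have hrow0 := congrFun hw ⟨0, by omega⟩
  rw [compM_mulVec, Pi.smul_apply, smul_eq_mul, dif_pos rfl, add_zero] at hrow0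
  have hfull : (∑ j : Fin (k+1), c j * lam ^ j.1) =
      (∑ j : Fin (k+1), if 0 < j.1 then c j * lam ^ j.1 else 0) + c ⟨0, by omega⟩ * lam ^ 0 := by
    have hterm : ∀ j : Fin (k+1), c j * lam ^ j.1 =
        (if 0 < j.1 then c j * lam ^ j.1 else 0)
          + (if j = ⟨0, by omega⟩ then c j * lam ^ j.1 else 0) := by
      intro j
      by_cases hj : j = ⟨0, by omega⟩
      · have hjv : j.1 = 0 := by rw [hj]
        rw [if_neg (by omega), if_pos hj, zero_add]
      · have hjv : j.1 ≠ 0 := fun h => hj (Fin.ext h)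
        rw [if_pos (by omega), if_neg hj, add_zero]
    rw [Finset.sum_congr rfl (fun j _ => hterm j), Finset.sum_add_distrib]
    congr 1
    rw [Finset.sum_ite_eq' Finset.univ (⟨0, by omega⟩ : Fin (k+1))
      (fun j => c j * lam ^ j.1), if_pos (Finset.mem_univ _)]
  have key : (lam ^ (k+1) - ∑ j : Fin (k+1), c j * lam ^ j.1) * w ⟨k, by omega⟩ = 0 := by
    rw [hfull]
    linear_combination (-1 : ℝ) * hc - hrow0
  rcases mul_eq_zero.mp key with h | h
  · linarith [h]
  · exact absurd h hlast

lemma compM_parallel (c : Fin (k+1) → ℝ) (lam : ℝ) (w w' : Fin (k+1) → ℝ)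
    (hw : compM c *ᵥ w = lam • w) (hw' : compM c *ᵥ w' = lam • w') :
    w' ⟨k, by omega⟩ • w - w ⟨k, by omega⟩ • w' = 0 := by
  apply compM_last_zero c lam
  · rw [Matrix.mulVec_sub, Matrix.mulVec_smul, Matrix.mulVec_smul, hw, hw']
    rw [smul_comm (w' ⟨k, by omega⟩) lam, smul_comm (w ⟨k, by omega⟩) lam, ← smul_sub]
  · simp [mul_comm]

lemma real_herm_transpose {n : ℕ} {M : Matrix (Fin n) (Fin n) ℝ} (h : M.IsHermitian) :
    Mᵀ = M := by
  ext i j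
  calc Mᵀ i j = M j i := rfl
    _ = star (M j i) := (star_trivial _).symm
    _ = Mᴴ i j := rfl
    _ = M i j := by rw [h]

lemma real_transpose_herm {n : ℕ} {M : Matrix (Fin n) (Fin n) ℝ} (h : Mᵀ = M) :
    M.IsHermitian := by
  rw [Matrix.IsHermitian]
  ext i j
  calc Mᴴ i j = star (M j i) := rfl
    _ = M j i := star_trivial _
    _ = Mᵀ i j := rfl
    _ = M i j := by rw [h]

lemma euclid_li {n : ℕ} (B : OrthonormalBasis (Fin n) ℝ (EuclideanSpace ℝ (Fin n)))
    (gg : Fin n → ℝ)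
    (hg : ∑ i, gg i • (WithLp.equiv 2 (Fin n → ℝ) (B i)) = (0 : Fin n → ℝ)) :
    ∀ i, gg i = 0 := by
  intro i
  refine Fintype.linearIndependent_iff.mp B.orthonormal.linearIndependent gg ?_ i
  apply (WithLp.linearEquiv 2 ℝ (Fin n → ℝ)).injective
  rw [map_sum, map_zero]
  simp only [_root_.map_smul]; exact hg

open Polynomial in
lemma posdef_atomic {k : ℕ} (β : Fin (2*k+1) → ℝ)
    (hPSD : (hankel β).PosSemidef) (hdet : (hankel β).det ≠ 0) :
    ∃ (x : Fin (k+1) → ℝ) (ρ : Fin (k+1) → ℝ),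
      Function.Injective x ∧ (∀ j, 0 < ρ j) ∧
      ∀ i : Fin (2*k+1), β i = ∑ j, ρ j * x j ^ (i:ℕ) := by
  classical
  set A := hankel β with hAdef
  have hAentry : ∀ i j : Fin (k+1), A i j = β ⟨i.1 + j.1, by omega⟩ := fun i j => rfl
  -- positive definiteness
  have hPD : A.PosDef := by
    refine posDef_iff_dotProduct_mulVec.mpr ⟨hPSD.1, fun z hz => ?_⟩
    rcases lt_or_eq_of_le (hPSD.dotProduct_mulVec_nonneg z) with h | h
    · exact h
    · exact absurd ((Matrix.exists_mulVec_eq_zero_iff).mp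
        ⟨z, hz, (hPSD.dotProduct_mulVec_zero_iff z).mp h.symm⟩) hdet
  have hAdetU : IsUnit A.det := isUnit_iff_ne_zero.mpr hdet
  -- the vector c
  obtain ⟨c, hAc⟩ : ∃ c, A *ᵥ c =
      (fun m : Fin (k+1) => if h : m.1 < k then β ⟨m.1 + k + 1, by omega⟩ else 0) :=
    ⟨A⁻¹ *ᵥ _, by rw [Matrix.mulVec_mulVec, Matrix.mul_nonsing_inv _ hAdetU, Matrix.one_mulVec]⟩
  -- the recurrence up to degree 2k
  have hrec : ∀ (m : ℕ) (hm : m < k),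
      β ⟨m + k + 1, by omega⟩ = ∑ j : Fin (k+1), c j * β ⟨m + j.1, by omega⟩ := by
    intro m hm
    have hr := congrFun hAc ⟨m, by omega⟩
    rw [Matrix.mulVec, dotProduct] at hr
    rw [dif_pos (show ((⟨m, by omega⟩ : Fin (k+1)) : ℕ) < k from hm)] at hr
    rw [← hr]
    exact Finset.sum_congr rfl fun j _ => by rw [hAentry]; ring
  -- the companion matrix
  set C := compM c with hCdef
  have hAC : ∀ i j : Fin (k+1), (A * C) i j =
      (if h : j.1 = k then (A *ᵥ c) i else A i ⟨j.1 + 1, by omega⟩) := by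
    intro i j
    rw [Matrix.mul_apply]
    by_cases hj : j.1 = k
    · rw [dif_pos hj, Matrix.mulVec, dotProduct]
      refine Finset.sum_congr rfl fun m _ => ?_
      rw [hCdef, compM, if_pos hj, if_neg (by have := m.2; omega), add_zero]
    · rw [dif_neg hj]
      have hterm : ∀ m : Fin (k+1), A i m * C m j =
          (if m = ⟨j.1 + 1, by omega⟩ then A i m else 0) := by
        intro m
        rw [hCdef, compM, if_neg hj, zero_add]
        by_cases hm : m = ⟨j.1 + 1, by omega⟩
        · rw [if_pos (by rw [hm]), if_pos hm, mul_one]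
        · rw [if_neg (fun h => hm (Fin.ext h)), if_neg hm, mul_zero]
      rw [Finset.sum_congr rfl (fun m _ => hterm m),
        Finset.sum_ite_eq' Finset.univ _ (fun m => A i m), if_pos (Finset.mem_univ _)]
  -- symmetry of A * C
  have hsymAC : ∀ i j : Fin (k+1), (A * C) i j = (A * C) j i := by
    have hv : ∀ (i : Fin (k+1)) (hik : i.1 < k), (A *ᵥ c) i = β ⟨i.1 + k + 1, by omega⟩ := by
      intro i hi
      rw [hAc]
      exact dif_pos hi
    intro i j
    rw [hAC, hAC]
    by_cases hj : j.1 = k <;> by_cases hi : i.1 = k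
    · rw [dif_pos hj, dif_pos hi]
      have : i = j := Fin.ext (by omega)
      rw [this]
    · rw [dif_pos hj, dif_neg hi, hv i (by omega), hAentry]
      exact congrArg β (Fin.ext (by simp; omega))
    · rw [dif_neg hj, dif_pos hi, hv j (by omega), hAentry]
      exact congrArg β (Fin.ext (by simp; omega))
    · rw [dif_neg hj, dif_neg hi, hAentry, hAentry]
      exact congrArg β (Fin.ext (by simp; omega))
  -- transposes
  have hAT : Aᵀ = A := by
    ext i j
    rw [Matrix.transpose_apply, hAentry, hAentry]
    exact congrArg β (Fin.ext (by simp [add_comm]))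
  have hCTA : Cᵀ * (A) = A * C := by
    have h1 : (A * C)ᵀ = A * C := by
      ext i j
      rw [Matrix.transpose_apply]
      exact hsymAC j i
    calc Cᵀ * A = Cᵀ * Aᵀ := by rw [hAT]
      _ = (A * C)ᵀ := (Matrix.transpose_mul A C).symm
      _ = A * C := h1
  -- the square root
  obtain ⟨R, hRR, hRHerm⟩ : ∃ R : Matrix (Fin (k+1)) (Fin (k+1)) ℝ,
      R * R = A ∧ R.IsHermitian :=
    by open scoped MatrixOrder in exact ⟨CFC.sqrt A, CFC.sqrt_mul_sqrt_self A hPSD.nonneg, (CFC.sqrt_nonneg A).posSemidef.1⟩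
  have hRdet : R.det ≠ 0 := by
    intro h
    have := congrArg Matrix.det hRR
    rw [Matrix.det_mul, h, mul_zero] at this
    exact hdet this.symm
  have hRu : IsUnit R.det := isUnit_iff_ne_zero.mpr hRdet
  have hRinv1 : R * R⁻¹ = 1 := Matrix.mul_nonsing_inv _ hRu
  have hRinv2 : R⁻¹ * R = 1 := Matrix.nonsing_inv_mul _ hRu
  have hRT : Rᵀ = R := real_herm_transpose hRHerm
  -- the symmetrized matrix S
  set S := R * C * R⁻¹ with hSdef
  have hkey : Cᵀ * (R * R) = (R * R) * C := by rw [hRR]; exact hCTA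
  have hherm : R⁻¹ * (Cᵀ * R) = R * (C * R⁻¹) := by
    have hkey'' : Cᵀ * (R * (R * R⁻¹)) = R * (R * (C * R⁻¹)) := by
      calc Cᵀ * (R * (R * R⁻¹)) = (Cᵀ * (R * R)) * R⁻¹ := by simp only [Matrix.mul_assoc]
        _ = ((R * R) * C) * R⁻¹ := by rw [hkey]
        _ = R * (R * (C * R⁻¹)) := by simp only [Matrix.mul_assoc]
    calc R⁻¹ * (Cᵀ * R)
        = R⁻¹ * (Cᵀ * (R * (R * R⁻¹))) := by rw [hRinv1, Matrix.mul_one]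
      _ = R⁻¹ * (R * (R * (C * R⁻¹))) := by rw [hkey'']
      _ = (R⁻¹ * R) * (R * (C * R⁻¹)) := by simp only [Matrix.mul_assoc]
      _ = R * (C * R⁻¹) := by rw [hRinv2, Matrix.one_mul]
  have hSH : S.IsHermitian := by
    refine real_transpose_herm ?_
    rw [hSdef, Matrix.transpose_mul, Matrix.transpose_mul, Matrix.transpose_nonsing_inv,
      hRT]
    calc R⁻¹ * (Cᵀ * R) = R * (C * R⁻¹) := hherm
      _ = R * C * R⁻¹ := by rw [Matrix.mul_assoc]
  have hS_eq : R⁻¹ * S * R = C := by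
    rw [hSdef]
    calc R⁻¹ * (R * C * R⁻¹) * R = ((R⁻¹ * R) * C) * (R⁻¹ * R) := by
          simp only [Matrix.mul_assoc]
      _ = C := by rw [hRinv2, Matrix.one_mul, Matrix.mul_one]
  -- eigen data
  have hRcancel : ∀ x y : Fin (k+1) → ℝ, R *ᵥ x = R *ᵥ y → x = y := by
    intro x y h
    have h2 := congrArg (fun z => R⁻¹ *ᵥ z) h
    simpa only [Matrix.mulVec_mulVec, hRinv2, Matrix.one_mulVec] using h2
  have hSR : S * R = R * C := by
    rw [hSdef]
    calc R * C * R⁻¹ * R = R * C * (R⁻¹ * R) := by simp only [Matrix.mul_assoc]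
      _ = R * C := by rw [hRinv2, Matrix.mul_one]
  obtain ⟨lam, bv, hbv, hbvne, hbli⟩ :
      ∃ (lam : Fin (k+1) → ℝ) (bv : Fin (k+1) → (Fin (k+1) → ℝ)),
        (∀ i, S *ᵥ bv i = lam i • bv i) ∧ (∀ i, bv i ≠ 0) ∧
        (∀ gg : Fin (k+1) → ℝ, ∑ i, gg i • bv i = 0 → ∀ i, gg i = 0) := by
    refine ⟨hSH.eigenvalues, fun i => WithLp.equiv 2 _ (hSH.eigenvectorBasis i),
      fun i => hSH.mulVec_eigenvectorBasis i, fun i h => ?_, fun gg hg => euclid_li _ gg hg⟩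
    apply hSH.eigenvectorBasis.orthonormal.ne_zero i
    apply (WithLp.linearEquiv 2 ℝ (Fin (k+1) → ℝ)).injective
    rw [map_zero]
    exact h
  obtain ⟨w, hRw⟩ : ∃ w : Fin (k+1) → (Fin (k+1) → ℝ), ∀ i, R *ᵥ w i = bv i :=
    ⟨fun i => R⁻¹ *ᵥ bv i, fun i => by rw [Matrix.mulVec_mulVec, hRinv1, Matrix.one_mulVec]⟩
  have hweig : ∀ i, C *ᵥ w i = lam i • w i := by
    intro i
    apply hRcancel
    calc R *ᵥ (C *ᵥ w i) = (R * C) *ᵥ w i := by rw [Matrix.mulVec_mulVec]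
      _ = (S * R) *ᵥ w i := by rw [hSR]
      _ = S *ᵥ (R *ᵥ w i) := by rw [Matrix.mulVec_mulVec]
      _ = S *ᵥ bv i := by rw [hRw]
      _ = lam i • bv i := hbv i
      _ = lam i • (R *ᵥ w i) := by rw [hRw]
      _ = R *ᵥ (lam i • w i) := by rw [Matrix.mulVec_smul]
  have hw0 : ∀ i, w i ≠ 0 := by
    intro i h
    apply hbvne i
    rw [← hRw i, h, Matrix.mulVec_zero]
  have hwlast : ∀ i, w i ⟨k, by omega⟩ ≠ 0 :=
    fun i h => hw0 i (compM_last_zero c (lam i) (w i) (hweig i) h)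
  -- injectivity of the eigenvalues
  have hlam_inj : Function.Injective lam := by
    intro a b hab
    by_contra hne
    have hwb : compM c *ᵥ w b = lam a • w b := by rw [hweig b, hab]
    have hpar := compM_parallel c (lam a) (w a) (w b) (hweig a) hwb
    have happ := congrArg (fun u => R *ᵥ u) hpar
    simp only [Matrix.mulVec_sub, Matrix.mulVec_smul, hRw, Matrix.mulVec_zero] at happ
    have hgsum : ∑ i, (if i = a then w b ⟨k, by omega⟩
        else if i = b then -(w a ⟨k, by omega⟩) else 0) • bv i = 0 := by
      have hterm : ∀ i : Fin (k+1), (if i = a then w b ⟨k, by omega⟩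
          else if i = b then -(w a ⟨k, by omega⟩) else 0) • bv i =
          (if i = a then w b ⟨k, by omega⟩ • bv i else 0) +
          (if i = b then (-(w a ⟨k, by omega⟩)) • bv i else 0) := by
        intro i
        by_cases hia : i = a
        · rw [if_pos hia, if_pos hia, if_neg (by rw [hia]; exact hne), add_zero]
        · rw [if_neg hia, if_neg hia, zero_add]
          by_cases hib : i = b
          · rw [if_pos hib, if_pos hib]
          · rw [if_neg hib, if_neg hib, zero_smul]
      rw [Finset.sum_congr rfl (fun i _ => hterm i), Finset.sum_add_distrib,
        Finset.sum_ite_eq' Finset.univ a, Finset.sum_ite_eq' Finset.univ b,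
        if_pos (Finset.mem_univ _), if_pos (Finset.mem_univ _), neg_smul, ← sub_eq_add_neg]
      exact happ
    have hz := hbli _ hgsum a
    simp only [if_pos rfl] at hz
    exact hwlast b hz
  -- all eigenvalues are roots
  have hroots : ∀ i, lam i ^ (k+1) = ∑ j : Fin (k+1), c j * lam i ^ j.1 :=
    fun i => compM_root c (lam i) (w i) (hweig i) (hw0 i)
  -- the weights
  set M := (Matrix.vandermonde lam)ᵀ with hMdef
  have hMdet : M.det ≠ 0 := by
    rw [hMdef, Matrix.det_transpose]
    exact Matrix.det_vandermonde_ne_zero_iff.mpr hlam_inj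
  obtain ⟨ρ, hMρ⟩ : ∃ ρ, M *ᵥ ρ = (fun i : Fin (k+1) => β ⟨i.1, by have := i.2; omega⟩) :=
    ⟨M⁻¹ *ᵥ _, by rw [Matrix.mulVec_mulVec, Matrix.mul_nonsing_inv _
      (isUnit_iff_ne_zero.mpr hMdet), Matrix.one_mulVec]⟩
  have hlow : ∀ i : Fin (k+1), β ⟨i.1, by have := i.2; omega⟩ = ∑ j, ρ j * lam j ^ i.1 := by
    intro i
    have hr := congrFun hMρ i
    rw [Matrix.mulVec, dotProduct] at hr
    rw [← hr]
    refine Finset.sum_congr rfl fun j _ => ?_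
    rw [hMdef, Matrix.transpose_apply, Matrix.vandermonde_apply]
    ring
  -- all moments
  have hall : ∀ (n : ℕ) (hn : n < 2*k+1), β ⟨n, hn⟩ = ∑ j, ρ j * lam j ^ n := by
    intro n
    induction n using Nat.strong_induction_on with
    | _ n IH =>
      intro hn
      by_cases hnk : n ≤ k
      · exact hlow ⟨n, by omega⟩
      · have hm : n - (k+1) < k := by omega
        have he : (⟨n, hn⟩ : Fin (2*k+1)) = ⟨(n - (k+1)) + k + 1, by omega⟩ :=
          Fin.ext (by simp; omega)
        rw [he, hrec (n - (k+1)) hm]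
        have hstep : ∀ j : Fin (k+1), c j * β ⟨(n - (k+1)) + j.1, by omega⟩ =
            ∑ t, c j * (ρ t * lam t ^ ((n - (k+1)) + j.1)) := by
          intro j
          rw [IH ((n - (k+1)) + j.1) (by have := j.2; omega) (by have := j.2; omega),
            Finset.mul_sum]
        rw [Finset.sum_congr rfl (fun j _ => hstep j), Finset.sum_comm]
        refine Finset.sum_congr rfl fun t _ => ?_
        have hpow : ρ t * lam t ^ n = ρ t * lam t ^ (n - (k+1)) * lam t ^ (k+1) := by
          rw [mul_assoc, ← pow_add, show (n - (k+1)) + (k+1) = n from by omega]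
        rw [hpow, hroots t, Finset.mul_sum]
        exact Finset.sum_congr rfl fun j _ => by rw [pow_add]; ring
  -- positivity of the weights via Lagrange polynomials
  have hρpos : ∀ j0 : Fin (k+1), 0 < ρ j0 := by
    intro j0
    have hInj : Set.InjOn lam ↑(Finset.univ : Finset (Fin (k+1))) := hlam_inj.injOn
    set L := Lagrange.basis Finset.univ lam j0 with hLdef
    have hdeg : L.natDegree < k + 1 := by
      rw [hLdef, Lagrange.natDegree_basis hInj (Finset.mem_univ _), Finset.card_univ,
        Fintype.card_fin]
      omega
    set f : Fin (k+1) → ℝ := fun t => L.coeff t.1 with hfdef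
    have heval : ∀ y : ℝ, L.eval y = ∑ t : Fin (k+1), f t * y ^ t.1 := by
      intro y
      rw [eval_eq_sum_range' hdeg y, ← Fin.sum_univ_eq_sum_range (fun i => L.coeff i * y ^ i)]
    have hv1 : L.eval (lam j0) = 1 := Lagrange.eval_basis_self hInj (Finset.mem_univ _)
    have hf0 : f ≠ 0 := by
      intro h
      have := heval (lam j0)
      rw [hv1, h] at this
      simp at this
    have hquad : 0 < star f ⬝ᵥ (A *ᵥ f) := hPD.dotProduct_mulVec_pos hf0
    have hEt : ∀ t, (∑ b : Fin (k+1), f b * lam t ^ b.1) = L.eval (lam t) :=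
      fun t => (heval (lam t)).symm
    have hdot : star f ⬝ᵥ (A *ᵥ f) = ∑ t, ρ t * (L.eval (lam t))^2 := by
      rw [dotProduct]
      have h1 : ∀ a : Fin (k+1), star f a * (A *ᵥ f) a =
          ∑ t, ρ t * lam t ^ a.1 * f a * L.eval (lam t) := by
        intro a
        rw [Matrix.mulVec, dotProduct, Pi.star_apply, star_trivial]
        have h2 : ∀ b : Fin (k+1), A a b * f b = ∑ t, ρ t * lam t ^ a.1 * (f b * lam t ^ b.1) := by
          intro b
          rw [hAentry, hall (a.1 + b.1) (by have := a.2; have := b.2; omega), Finset.sum_mul]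
          exact Finset.sum_congr rfl fun t _ => by rw [pow_add]; ring
        rw [Finset.sum_congr rfl (fun b _ => h2 b), Finset.sum_comm, Finset.mul_sum]
        refine Finset.sum_congr rfl fun t _ => ?_
        rw [← hEt t, Finset.mul_sum, Finset.mul_sum]
        refine Finset.sum_congr rfl fun b _ => by ring
      rw [Finset.sum_congr rfl (fun a _ => h1 a), Finset.sum_comm]
      refine Finset.sum_congr rfl fun t _ => ?_
      rw [sq, ← hEt t]
      simp only [Finset.sum_mul, Finset.mul_sum]
      refine Finset.sum_congr rfl fun a _ => ?_
      exact Finset.sum_congr rfl fun b _ => by ring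
    have hIte : ∀ t, L.eval (lam t) = if t = j0 then 1 else 0 := by
      intro t
      by_cases ht : t = j0
      · rw [if_pos ht, ht, hv1]
      · rw [if_neg ht, hLdef]
        exact Lagrange.eval_basis_of_ne (fun h => ht (Eq.symm h)) (Finset.mem_univ _)
    have hfin : star f ⬝ᵥ (A *ᵥ f) = ρ j0 := by
      rw [hdot]
      have : ∀ t, ρ t * (L.eval (lam t))^2 = if t = j0 then ρ t else 0 := by
        intro t
        rw [hIte t]
        by_cases ht : t = j0
        · rw [if_pos ht, if_pos ht]; norm_num
        · rw [if_neg ht, if_neg ht]; norm_num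
      rw [Finset.sum_congr rfl (fun t _ => this t),
        Finset.sum_ite_eq' Finset.univ j0 (fun t => ρ t), if_pos (Finset.mem_univ _)]
    rw [hfin] at hquad
    exact hquad
  exact ⟨lam, ρ, hlam_inj, hρpos, fun i => hall i.1 i.2⟩

theorem stmt13 {k : ℕ} (β : Fin (2*k+1) → ℝ) (hβ0 : β ⟨0, by omega⟩ > 0)
    (h : HasRep k β) :
    ∃ (x : Fin (hankelRank (hankel β)) → ℝ) (ρ : Fin (hankelRank (hankel β)) → ℝ),
      Function.Injective x ∧ (∀ j, 0 < ρ j) ∧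
      ∀ i : Fin (2*k+1), β i = ∑ j, ρ j * x j ^ (i : ℕ) := by
  obtain ⟨μ, hint, hmom⟩ := h
  by_cases hdet : (hankel β).det ≠ 0
  · have hrk : hankelRank (hankel β) = k + 1 := by
      unfold hankelRank
      rw [if_pos hdet]
    rw [hrk]
    exact posdef_atomic β (hankel_posSemidef β μ hint hmom) hdet
  · rw [not_not] at hdet
    obtain ⟨s, hs1, hsk, x, ρ, hxinj, hρ, hmomatom⟩ := rep_atomic β μ hint hmom hβ0 hdet
    have hAentry : ∀ i j : Fin (k+1), hankel β i j = ∑ m, ρ m * x m ^ (i.1 + j.1) :=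
      fun i j => hmomatom ⟨i.1 + j.1, by have := i.2; have := j.2; omega⟩
    obtain ⟨hmem, hnotmem⟩ := atomic_cols (hankel β) hsk x ρ hxinj hρ hAentry
    have hrk : hankelRank (hankel β) = s := by
      unfold hankelRank
      rw [if_neg (by simpa using hdet)]
      refine le_antisymm (Nat.sInf_le ⟨by omega, hmem⟩)
        (le_csInf ⟨s, ⟨by omega, hmem⟩⟩ ?_)
      intro t ht
      by_contra hlt
      push_neg at hlt
      obtain ⟨htk, hspan⟩ := ht
      exact hnotmem t hlt hspan
    rw [hrk]
    exact ⟨x, ρ, hxinj, hρ, hmomatom⟩
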